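/- Let n ≥ 1, m ∈ ℝ, r ≥ 0, and let p : ℤⁿ → ℂ be a symbol of order m. Then: (i) if p(D) is GH-r, then p(D) is GS-r; (ii) if the set {ξ ∈ ℤⁿ : p(ξ) = 0} is finite, then p(D) is GH-r if and only if p(D) is GS-r; (iii) if p(D) is GH-r₀ for some r₀ ≥ 0, then for every s ≥ 0, p(D) is GH-s if and only if p(D) is GS-s (hence the global hypoellipticity and global solvability indices coincide). -/

import Mathlib

open scoped BigOperators

/-- `|ξ| = Σⱼ |ξⱼ|`. -/
noncomputable def l1norm {n : ℕ} (ξ : Fin n → ℤ) : ℝ := ∑ j, |(ξ j : ℝ)|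

/-- `‖ξ‖² = Σⱼ ξⱼ²`. -/
noncomputable def l2normSq {n : ℕ} (ξ : Fin n → ℤ) : ℝ := ∑ j, ((ξ j : ℝ)) ^ 2

/-- `u ∈ H^k(𝕋ⁿ)` in terms of its Fourier coefficients. -/
def InSobolev {n : ℕ} (k : ℝ) (u : (Fin n → ℤ) → ℂ) : Prop :=
  Summable fun ξ : Fin n → ℤ => (1 + l2normSq ξ) ^ k * ‖u ξ‖ ^ 2

/-- Polynomial growth of Fourier coefficients (a distribution on `𝕋ⁿ`). -/
def PolyGrowth {n : ℕ} (u : (Fin n → ℤ) → ℂ) : Prop :=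
  ∃ C N : ℝ, 0 < C ∧ 0 < N ∧
    ∀ ξ, ‖u ξ‖ ≤ C * (1 + Real.sqrt (l2normSq ξ)) ^ N

/-- Rapidly decreasing Fourier coefficients (a smooth function on `𝕋ⁿ`). -/
def RapidDecay {n : ℕ} (v : (Fin n → ℤ) → ℂ) : Prop :=
  ∀ N : ℝ, 0 < N → ∃ C : ℝ, 0 < C ∧
    ∀ ξ, ‖v ξ‖ ≤ C * (1 + Real.sqrt (l2normSq ξ)) ^ (-N)

/-- `p` is a symbol of order `m`. -/
def SymbolOrder {n : ℕ} (m : ℝ) (p : (Fin n → ℤ) → ℂ) : Prop :=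
  ∃ C : ℝ, 0 < C ∧ ∀ ξ, ‖p ξ‖ ≤ C * (1 + l2normSq ξ) ^ (m / 2)

/-- `p(D)` is globally hypoelliptic with loss of `r` derivatives (GH-`r`). -/
def GHr {n : ℕ} (m r : ℝ) (p : (Fin n → ℤ) → ℂ) : Prop :=
  ∀ (k : ℝ) (u : (Fin n → ℤ) → ℂ), PolyGrowth u →
    InSobolev k (fun ξ => p ξ * u ξ) → InSobolev (k + m - r) u

/-- `p(D)` is globally solvable with loss of `r` derivatives (GS-`r`). -/
def GSr {n : ℕ} (m r : ℝ) (p : (Fin n → ℤ) → ℂ) : Prop :=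
  ∀ (k : ℝ) (f : (Fin n → ℤ) → ℂ), InSobolev k f → (∀ ξ, p ξ = 0 → f ξ = 0) →
    ∃ u : (Fin n → ℤ) → ℂ, InSobolev (k + m - r) u ∧ ∀ ξ, p ξ * u ξ = f ξ

/-- `p(D)` is globally hypoelliptic (GH). -/
def GloballyHypoelliptic {n : ℕ} (p : (Fin n → ℤ) → ℂ) : Prop :=
  ∀ u : (Fin n → ℤ) → ℂ, PolyGrowth u →
    RapidDecay (fun ξ => p ξ * u ξ) → RapidDecay u

lemma l2_nonneg {n : ℕ} (ξ : Fin n → ℤ) : 0 ≤ l2normSq ξ :=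
  Finset.sum_nonneg fun _ _ => sq_nonneg _

lemma one_le_wt {n : ℕ} (ξ : Fin n → ℤ) : (1:ℝ) ≤ 1 + l2normSq ξ := by
  linarith [l2_nonneg ξ]

lemma wt_pos {n : ℕ} (ξ : Fin n → ℤ) : (0:ℝ) < 1 + l2normSq ξ :=
  lt_of_lt_of_le one_pos (one_le_wt ξ)

lemma finite_of_summable {ι : Type*} {f : ι → ℝ} (hf : Summable f) {S : Set ι}
    (h : ∀ x ∈ S, (1:ℝ) ≤ f x) : S.Finite := by
  have h2 := hf.tendsto_cofinite_zero.eventually_lt_const (by norm_num : (0:ℝ) < 1)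
  rw [Filter.eventually_cofinite] at h2
  exact h2.subset fun x hx => not_lt.2 (h x hx)

lemma summable_of_eq_off_finite {ι : Type*} {f g : ι → ℝ} (hg : Summable g) {S : Set ι}
    (hS : S.Finite) (h : ∀ x ∉ S, f x = g x) : Summable f := by
  have hd : Summable (fun x => f x - g x) := by
    apply summable_of_ne_finset_zero (s := hS.toFinset)
    intro x hx
    rw [h x (by simpa using hx)]; ring
  exact (hg.add hd).congr fun x => by ring

lemma sumZ : Summable fun x : ℤ => ((1:ℝ) + (x:ℝ)^2)⁻¹ := by
  have hnat : Summable fun x : ℕ => ((1:ℝ) + (x:ℝ)^2)⁻¹ := by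
    have h1 : Summable fun x : ℕ => (1:ℝ)/((x:ℝ)+1)^2 := by
      have := (summable_nat_add_iff (f := fun x : ℕ => 1/((x:ℝ))^2) 1).2
        (Real.summable_one_div_nat_pow.2 one_lt_two)
      apply this.congr; intro x; push_cast; ring_nf
    apply Summable.of_nonneg_of_le (fun x => by positivity) _ (h1.mul_left 4)
    intro x
    have h2 : (0:ℝ) < ((x:ℝ)+1)^2 := by positivity
    have h3 : (0:ℝ) < 1 + (x:ℝ)^2 := by positivity
    rw [inv_le_iff_one_le_mul₀ h3, mul_comm,
      show (1+(x:ℝ)^2) * (4 * (1/((x:ℝ)+1)^2)) = ((1+(x:ℝ)^2)*4)/(((x:ℝ)+1)^2) by ring,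
      le_div_iff₀ h2, one_mul]
    nlinarith [sq_nonneg ((x:ℝ)-1)]
  apply hnat.of_nat_of_neg
  apply hnat.congr; intro x; push_cast; ring_nf


lemma sumProd : ∀ n : ℕ, Summable fun ξ : Fin n → ℤ => ∏ j, ((1:ℝ) + (ξ j:ℝ)^2)⁻¹ := by
  intro n
  induction n with
  | zero => exact .of_finite
  | succ n ih =>
    rw [← (Fin.consEquiv (fun _ : Fin (n+1) => ℤ)).summable_iff]
    have h := sumZ.mul_of_nonneg ih (fun x => by positivity)
      (fun ξ => Finset.prod_nonneg fun j _ => by positivity)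
    apply h.congr
    rintro ⟨x, y⟩
    simp only [Function.comp, Fin.consEquiv_apply, Fin.prod_univ_succ, Fin.cons_zero,
      Fin.cons_succ]

lemma sumWeight (n : ℕ) : Summable fun ξ : Fin n → ℤ => (1 + l2normSq ξ) ^ (-(n:ℝ)) := by
  apply Summable.of_nonneg_of_le (fun ξ => Real.rpow_nonneg (wt_pos ξ).le _) _ (sumProd n)
  intro ξ
  have h1 : ∏ j, ((1:ℝ) + (ξ j:ℝ)^2) ≤ (1 + l2normSq ξ) ^ (n:ℕ) := by
    have : ∀ j ∈ Finset.univ, (1:ℝ) + (ξ j:ℝ)^2 ≤ 1 + l2normSq ξ := by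
      intro j _
      have : ((ξ j:ℝ))^2 ≤ l2normSq ξ :=
        Finset.single_le_sum (f := fun j => ((ξ j:ℝ))^2) (fun i _ => sq_nonneg _)
          (Finset.mem_univ j)
      linarith
    calc ∏ j, ((1:ℝ) + (ξ j:ℝ)^2) ≤ ∏ _j : Fin n, (1 + l2normSq ξ) :=
          Finset.prod_le_prod (fun j _ => by positivity) this
      _ = (1 + l2normSq ξ) ^ (n:ℕ) := by simp
  have h2 : (1 + l2normSq ξ) ^ (-(n:ℝ)) = ((1 + l2normSq ξ) ^ (n:ℕ))⁻¹ := by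
    rw [Real.rpow_neg (le_of_lt (wt_pos ξ)), Real.rpow_natCast]
  rw [h2]
  calc ((1 + l2normSq ξ)^(n:ℕ))⁻¹ ≤ (∏ j, ((1:ℝ)+(ξ j:ℝ)^2))⁻¹ :=
        inv_anti₀ (Finset.prod_pos fun j _ => by positivity) h1
    _ = ∏ j, ((1:ℝ)+(ξ j:ℝ)^2)⁻¹ := (Finset.prod_inv_distrib _).symm


lemma polyGrowth_indicator {n : ℕ} (S : Set (Fin n → ℤ)) :
    PolyGrowth (S.indicator fun _ => (1:ℂ)) := by
  refine ⟨1, 1, one_pos, one_pos, fun ξ => ?_⟩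
  have h1 : ‖S.indicator (fun _ => (1:ℂ)) ξ‖ ≤ 1 := by
    by_cases h : ξ ∈ S
    · simp [Set.indicator_of_mem h]
    · simp [Set.indicator_of_notMem h]
  have h2 : (1:ℝ) ≤ 1 + Real.sqrt (l2normSq ξ) := by
    have := Real.sqrt_nonneg (l2normSq ξ); linarith
  calc ‖S.indicator (fun _ => (1:ℂ)) ξ‖ ≤ 1 := h1
    _ ≤ 1 * (1 + Real.sqrt (l2normSq ξ)) ^ (1:ℝ) := by
        rw [one_mul, Real.rpow_one]; exact h2

lemma lemmaA {n : ℕ} {m r : ℝ} {p : (Fin n → ℤ) → ℂ} (hGH : GHr m r p) :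
    ∃ c : ℝ, 0 < c ∧ ∃ E : ℕ, ∀ ξ, p ξ ≠ 0 →
      c * (1 + l2normSq ξ) ^ (-(E:ℝ)) ≤ ‖p ξ‖ := by
  by_contra hcon
  -- Step 1: for every E the bad set is infinite
  have hinf : ∀ E : ℕ,
      {ξ : Fin n → ℤ | p ξ ≠ 0 ∧
        ‖p ξ‖ < (1 + l2normSq ξ) ^ (-(E:ℝ))}.Infinite := by
    intro E
    by_contra hfin
    rw [Set.not_infinite] at hfin
    set F := hfin.toFinset with hF
    set G := insert (1:ℝ) (F.image fun ξ => ‖p ξ‖ * (1 + l2normSq ξ) ^ ((E:ℝ)))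
      with hG
    have hGne : G.Nonempty := ⟨1, Finset.mem_insert_self _ _⟩
    set c₀ := G.min' hGne with hc₀
    have hc₀pos : 0 < c₀ := by
      rw [hc₀, Finset.lt_min'_iff]
      intro y hy
      rw [hG, Finset.mem_insert] at hy
      rcases hy with h | h
      · rw [h]; norm_num
      · obtain ⟨ξ, hξF, hval⟩ := Finset.mem_image.1 h
        have hξ : p ξ ≠ 0 := (hfin.mem_toFinset.1 hξF).1
        rw [← hval]
        exact mul_pos (by simpa using hξ) (Real.rpow_pos_of_pos (wt_pos ξ) _)
    apply hcon
    refine ⟨c₀, hc₀pos, E, fun ξ hξ => ?_⟩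
    by_cases hmem : ξ ∈ {ξ : Fin n → ℤ | p ξ ≠ 0 ∧
        ‖p ξ‖ < (1 + l2normSq ξ) ^ (-(E:ℝ))}
    · have hle : c₀ ≤ ‖p ξ‖ * (1 + l2normSq ξ) ^ ((E:ℝ)) :=
        Finset.min'_le _ _ (Finset.mem_insert_of_mem
          (Finset.mem_image_of_mem _ (hfin.mem_toFinset.2 hmem)))
      have hkey : (1 + l2normSq ξ) ^ ((E:ℝ)) * (1 + l2normSq ξ) ^ (-(E:ℝ)) = 1 := by
        rw [← Real.rpow_add (wt_pos ξ)]; simp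
      have hwpos : (0:ℝ) < (1 + l2normSq ξ) ^ (-(E:ℝ)) := Real.rpow_pos_of_pos (wt_pos ξ) _
      calc c₀ * (1 + l2normSq ξ) ^ (-(E:ℝ))
          ≤ (‖p ξ‖ * (1 + l2normSq ξ) ^ ((E:ℝ))) * (1 + l2normSq ξ) ^ (-(E:ℝ)) :=
            mul_le_mul_of_nonneg_right hle hwpos.le
        _ = ‖p ξ‖ := by rw [mul_assoc, hkey, mul_one]
    · have h1 : (1 + l2normSq ξ) ^ (-(E:ℝ)) ≤ ‖p ξ‖ :=
        not_lt.1 fun h => hmem ⟨hξ, h⟩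
      have hc1 : c₀ ≤ 1 := Finset.min'_le _ _ (Finset.mem_insert_self _ _)
      have hwpos : (0:ℝ) < (1 + l2normSq ξ) ^ (-(E:ℝ)) := Real.rpow_pos_of_pos (wt_pos ξ) _
      nlinarith
  -- Step 2: contradiction with GH
  set k := r - m with hk
  set E := n + 1 + ⌈|k|⌉₊ with hE
  set T := {ξ : Fin n → ℤ | p ξ ≠ 0 ∧
    ‖p ξ‖ < (1 + l2normSq ξ) ^ (-(E:ℝ))} with hT
  set u := T.indicator (fun _ => (1:ℂ)) with hu
  have hpu : InSobolev k (fun ξ => p ξ * u ξ) := by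
    apply Summable.of_nonneg_of_le
      (fun ξ => mul_nonneg (Real.rpow_nonneg (wt_pos ξ).le _) (pow_nonneg (norm_nonneg _) 2))
      _ (sumWeight n)
    intro ξ
    by_cases hmem : ξ ∈ T
    · have h1 : ‖p ξ * u ξ‖ = ‖p ξ‖ := by
        rw [hu, Set.indicator_of_mem hmem, mul_one]
      have hlt : ‖p ξ‖ ≤ (1 + l2normSq ξ) ^ (-(E:ℝ)) := hmem.2.le
      have hsq : ‖p ξ‖ ^ 2 ≤ ((1 + l2normSq ξ) ^ (-(E:ℝ))) ^ 2 :=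
        pow_le_pow_left₀ (norm_nonneg _) hlt 2
      have hw : (0:ℝ) < 1 + l2normSq ξ := wt_pos ξ
      calc (1 + l2normSq ξ) ^ k * ‖p ξ * u ξ‖ ^ 2
          ≤ (1 + l2normSq ξ) ^ k * ((1 + l2normSq ξ) ^ (-(E:ℝ))) ^ 2 := by
            rw [h1]; exact mul_le_mul_of_nonneg_left hsq (Real.rpow_nonneg hw.le _)
        _ = (1 + l2normSq ξ) ^ (k + (-(E:ℝ)) * 2) := by
            rw [← Real.rpow_natCast ((1 + l2normSq ξ) ^ (-(E:ℝ))) 2, ← Real.rpow_mul hw.le,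
              ← Real.rpow_add hw]
            norm_num
        _ ≤ (1 + l2normSq ξ) ^ (-(n:ℝ)) := by
            apply Real.rpow_le_rpow_of_exponent_le (one_le_wt ξ)
            have h2 : |k| ≤ (⌈|k|⌉₊ : ℝ) := Nat.le_ceil _
            have h3 : k ≤ |k| := le_abs_self k
            have h4 : ((E:ℕ):ℝ) = (n:ℝ) + 1 + (⌈|k|⌉₊ : ℝ) := by rw [hE]; push_cast; ring
            rw [h4]
            linarith
    · simp only [hu, Set.indicator_of_notMem hmem, mul_zero, norm_zero]
      rw [zero_pow (by norm_num : 2 ≠ 0), mul_zero]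
      exact Real.rpow_nonneg (wt_pos ξ).le _
  have hus := hGH k u (polyGrowth_indicator T) hpu
  have hk0 : k + m - r = 0 := by rw [hk]; ring
  rw [hk0] at hus
  have hTfin : T.Finite := by
    apply finite_of_summable hus
    intro ξ hξ
    rw [hu, Set.indicator_of_mem hξ, Real.rpow_zero]
    simp
  exact hinf E hTfin


lemma gh_to_gs {n : ℕ} {m r : ℝ} {p : (Fin n → ℤ) → ℂ} (hGH : GHr m r p) : GSr m r p := by
  classical
  obtain ⟨c, hc, E, hlow⟩ := lemmaA hGH
  intro k f hf hker
  set u : (Fin n → ℤ) → ℂ := fun ξ => if p ξ = 0 then 0 else f ξ / p ξ with hud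
  have hpu : ∀ ξ, p ξ * u ξ = f ξ := by
    intro ξ
    by_cases h : p ξ = 0
    · rw [hud]; simp [h, hker ξ h]
    · rw [hud]; simp only [if_neg h]; field_simp
  set S := ∑' ξ : Fin n → ℤ, (1 + l2normSq ξ) ^ k * ‖f ξ‖ ^ 2 with hS
  have hSnn : 0 ≤ S := tsum_nonneg fun ξ =>
    mul_nonneg (Real.rpow_nonneg (wt_pos ξ).le _) (pow_nonneg (norm_nonneg _) 2)
  have hfbd : ∀ ξ, ‖f ξ‖ ≤ Real.sqrt S * (1 + l2normSq ξ) ^ (-k/2) := by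
    intro ξ
    have h1 : (1 + l2normSq ξ) ^ k * ‖f ξ‖ ^ 2 ≤ S :=
      Summable.le_tsum hf ξ fun j _ =>
        mul_nonneg (Real.rpow_nonneg (wt_pos j).le _) (pow_nonneg (norm_nonneg _) 2)
    have hw : (0:ℝ) < (1 + l2normSq ξ) ^ k := Real.rpow_pos_of_pos (wt_pos ξ) _
    have h2 : ‖f ξ‖ ^ 2 ≤ S * (1 + l2normSq ξ) ^ (-k) := by
      rw [Real.rpow_neg (wt_pos ξ).le, ← div_eq_mul_inv, le_div_iff₀ hw]
      linarith [h1]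
    have h3 : ‖f ξ‖ = Real.sqrt (‖f ξ‖ ^ 2) :=
      (Real.sqrt_sq (norm_nonneg _)).symm
    rw [h3]
    calc Real.sqrt (‖f ξ‖ ^ 2) ≤ Real.sqrt (S * (1 + l2normSq ξ) ^ (-k)) :=
          Real.sqrt_le_sqrt h2
      _ = Real.sqrt S * (1 + l2normSq ξ) ^ (-k/2) := by
          rw [Real.sqrt_mul hSnn]
          congr 1
          rw [Real.sqrt_eq_rpow, ← Real.rpow_mul (wt_pos ξ).le]
          congr 1
          ring
  have hpoly : PolyGrowth u := by
    refine ⟨c⁻¹ * (Real.sqrt S + 1), 2*(E:ℝ) + |k| + 1, by positivity, by positivity, fun ξ => ?_⟩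
    set t := Real.sqrt (l2normSq ξ) with ht
    have htnn : 0 ≤ t := Real.sqrt_nonneg _
    have hbase : (1:ℝ) ≤ 1 + t := by linarith
    by_cases h : p ξ = 0
    · rw [hud]; simp only [if_pos h, norm_zero]
      positivity
    · have habs : ‖u ξ‖ = ‖f ξ‖ / ‖p ξ‖ := by
        rw [hud]; simp only [if_neg h, norm_div]
      have hpl := hlow ξ h
      have hppos : 0 < ‖p ξ‖ := norm_pos_iff.2 h
      have hwE : (0:ℝ) < (1 + l2normSq ξ) ^ (-(E:ℝ)) := Real.rpow_pos_of_pos (wt_pos ξ) _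
      have h4 : ‖u ξ‖ ≤ ‖f ξ‖ / (c * (1 + l2normSq ξ) ^ (-(E:ℝ))) := by
        rw [habs]
        gcongr
      have h5 : ‖f ξ‖ / (c * (1 + l2normSq ξ) ^ (-(E:ℝ)))
          = c⁻¹ * ‖f ξ‖ * (1 + l2normSq ξ) ^ ((E:ℝ)) := by
        have hx : ((1 + l2normSq ξ) ^ ((E:ℝ)))⁻¹ = (1 + l2normSq ξ) ^ (-(E:ℝ)) :=
          (Real.rpow_neg (wt_pos ξ).le _).symm
        have hxp : (0:ℝ) < (1 + l2normSq ξ) ^ ((E:ℝ)) := Real.rpow_pos_of_pos (wt_pos ξ) _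
        rw [← hx]
        field_simp
      have h6 : c⁻¹ * ‖f ξ‖ * (1 + l2normSq ξ) ^ ((E:ℝ))
          ≤ c⁻¹ * (Real.sqrt S * (1 + l2normSq ξ) ^ (-k/2)) * (1 + l2normSq ξ) ^ ((E:ℝ)) := by
        have hb := hfbd ξ
        have h1 : 0 ≤ (1 + l2normSq ξ) ^ ((E:ℝ)) := (Real.rpow_pos_of_pos (wt_pos ξ) _).le
        have h2 : 0 ≤ c⁻¹ := inv_nonneg.2 hc.le
        exact mul_le_mul_of_nonneg_right (mul_le_mul_of_nonneg_left hb h2) h1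
      have h7 : c⁻¹ * (Real.sqrt S * (1 + l2normSq ξ) ^ (-k/2)) * (1 + l2normSq ξ) ^ ((E:ℝ))
          = c⁻¹ * Real.sqrt S * (1 + l2normSq ξ) ^ ((E:ℝ) + -k/2) := by
        rw [Real.rpow_add (wt_pos ξ)]
        ring
      have key2 : 1 + l2normSq ξ ≤ (1 + t) ^ (2:ℕ) := by
        have : t ^ 2 = l2normSq ξ := Real.sq_sqrt (l2_nonneg ξ)
        nlinarith
      have key3 : (1 + l2normSq ξ) ^ ((E:ℝ) + -k/2) ≤ (1 + t) ^ (2*(E:ℝ) + |k| + 1) := by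
        have ha : (0:ℝ) ≤ (E:ℝ) + |k|/2 := by positivity
        calc (1 + l2normSq ξ) ^ ((E:ℝ) + -k/2) ≤ (1 + l2normSq ξ) ^ ((E:ℝ) + |k|/2) := by
              apply Real.rpow_le_rpow_of_exponent_le (one_le_wt ξ)
              have := neg_abs_le k
              linarith
          _ ≤ ((1 + t) ^ (2:ℕ)) ^ ((E:ℝ) + |k|/2) :=
              Real.rpow_le_rpow (wt_pos ξ).le key2 ha
          _ = (1 + t) ^ ((2:ℝ) * ((E:ℝ) + |k|/2)) := by
              rw [← Real.rpow_natCast (1+t) 2, ← Real.rpow_mul (by linarith : (0:ℝ) ≤ 1 + t)]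
              norm_num
          _ ≤ (1 + t) ^ (2*(E:ℝ) + |k| + 1) := by
              apply Real.rpow_le_rpow_of_exponent_le hbase
              linarith
      calc ‖u ξ‖ ≤ ‖f ξ‖ / (c * (1 + l2normSq ξ) ^ (-(E:ℝ))) := h4
        _ = c⁻¹ * ‖f ξ‖ * (1 + l2normSq ξ) ^ ((E:ℝ)) := h5
        _ ≤ c⁻¹ * (Real.sqrt S * (1 + l2normSq ξ) ^ (-k/2)) * (1 + l2normSq ξ) ^ ((E:ℝ)) := h6
        _ = c⁻¹ * Real.sqrt S * (1 + l2normSq ξ) ^ ((E:ℝ) + -k/2) := h7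
        _ ≤ c⁻¹ * Real.sqrt S * (1 + t) ^ (2*(E:ℝ) + |k| + 1) := by
            have : (0:ℝ) ≤ c⁻¹ * Real.sqrt S := by positivity
            exact mul_le_mul_of_nonneg_left key3 this
        _ ≤ c⁻¹ * (Real.sqrt S + 1) * (1 + t) ^ (2*(E:ℝ) + |k| + 1) := by
            have h8 : (0:ℝ) ≤ (1 + t) ^ (2*(E:ℝ) + |k| + 1) :=
              Real.rpow_nonneg (by linarith) _
            have h9 : c⁻¹ * Real.sqrt S ≤ c⁻¹ * (Real.sqrt S + 1) := by
              have := inv_nonneg.2 hc.le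
              nlinarith
            exact mul_le_mul_of_nonneg_right h9 h8
  have hfs : InSobolev k (fun ξ => p ξ * u ξ) := by
    have heq : (fun ξ => p ξ * u ξ) = f := funext hpu
    rw [heq]
    exact hf
  exact ⟨u, hGH k u hpoly hfs, hpu⟩

lemma gs_to_gh {n : ℕ} {m r : ℝ} {p : (Fin n → ℤ) → ℂ}
    (hfin : {ξ : Fin n → ℤ | p ξ = 0}.Finite) (hGS : GSr m r p) : GHr m r p := by
  intro k u hu hpu
  obtain ⟨v, hv, hpv⟩ := hGS k (fun ξ => p ξ * u ξ) hpu (fun ξ h => by simp [h])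
  apply summable_of_eq_off_finite hv hfin
  intro ξ hξ
  have hps : p ξ ≠ 0 := hξ
  have : v ξ = u ξ := mul_left_cancel₀ hps (hpv ξ)
  rw [this]

lemma gh_zfin {n : ℕ} {m r₀ : ℝ} {p : (Fin n → ℤ) → ℂ} (hGH : GHr m r₀ p) :
    {ξ : Fin n → ℤ | p ξ = 0}.Finite := by
  set Z := {ξ : Fin n → ℤ | p ξ = 0} with hZ
  set u := Z.indicator (fun _ => (1:ℂ)) with hud
  have hzero : ∀ ξ, p ξ * u ξ = 0 := by
    intro ξ
    by_cases h : ξ ∈ Z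
    · have hp0 : p ξ = 0 := h
      rw [hp0, zero_mul]
    · rw [hud, Set.indicator_of_notMem h, mul_zero]
  have h0 : InSobolev (r₀ - m) (fun ξ => p ξ * u ξ) := by
    apply Summable.congr (show Summable (fun _ : Fin n → ℤ => (0:ℝ)) from summable_zero)
    intro ξ
    simp [hzero ξ]
  have hus := hGH (r₀ - m) u (polyGrowth_indicator Z) h0
  have hk0 : r₀ - m + m - r₀ = 0 := by ring
  rw [hk0] at hus
  apply finite_of_summable hus
  intro ξ hξ
  rw [hud, Set.indicator_of_mem hξ, Real.rpow_zero]
  simp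


theorem stmt_8 {n : ℕ} (hn : 1 ≤ n) (m r : ℝ) (hr : 0 ≤ r)
    (p : (Fin n → ℤ) → ℂ) (hp : SymbolOrder m p) :
    (GHr m r p → GSr m r p) ∧
    ({ξ : Fin n → ℤ | p ξ = 0}.Finite → (GHr m r p ↔ GSr m r p)) ∧
    ((∃ r₀ : ℝ, 0 ≤ r₀ ∧ GHr m r₀ p) →
      ∀ s : ℝ, 0 ≤ s → (GHr m s p ↔ GSr m s p)) := by
  refine ⟨fun h => gh_to_gs h, fun hfin => ⟨fun h => gh_to_gs h, fun h => gs_to_gh hfin h⟩,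
    ?_⟩
  rintro ⟨r₀, -, h₀⟩ s -
  exact ⟨fun h => gh_to_gs h, fun h => gs_to_gh (gh_zfin h₀) h⟩
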